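/- Let E₁, …, E₉ be the nine edges of the 18-ray Kochen–Specker hypergraph. For every w : {1,…,18} → [0,1] satisfying the normalization constraints Σ_{κ∈E_i} w_κ = 1 for each i ∈ {1,…,9}, one has (1/9) Σ_{i=1}^{9} max_{κ∈E_i} w_κ ≤ 5/6. Moreover this bound is attained, e.g. by the assignment w = (1,0,0,0,1,0,0,0,½,½,½,0,0,0,1,0,0,0) (entries listed in the order κ = 1,…,18). -/
import Mathlib


open scoped BigOperators

/-- The nine edges of the 18-ray Kochen–Specker hypergraph of Cabello et al.
(vertices `0,…,17` correspond to rays `1,…,18`). -/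
def edges18 : Fin 9 → Finset (Fin 18) :=
  ![{0, 1, 2, 3}, {3, 4, 5, 6}, {6, 7, 8, 9}, {9, 10, 11, 12}, {12, 13, 14, 15},
    {15, 16, 17, 0}, {17, 1, 8, 10}, {2, 4, 11, 13}, {5, 7, 14, 16}]

lemma edges18_nonempty (i : Fin 9) : (edges18 i).Nonempty := by
  fin_cases i <;> decide

/-- The optimal measurement-noncontextual assignment
`(1,0,0,0,1,0,0,0,½,½,½,0,0,0,1,0,0,0)`. -/
noncomputable def wOpt : Fin 18 → ℝ :=
  ![1, 0, 0, 0, 1, 0, 0, 0, 1/2, 1/2, 1/2, 0, 0, 0, 1, 0, 0, 0]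

open Finset

lemma vertex_deg (κ : Fin 18) : (Finset.univ.filter fun i => κ ∈ edges18 i).card = 2 := by
  revert κ; decide

lemma inter_card : ∀ (i j : Fin 9), i ≠ j → (edges18 i ∩ edges18 j).card ≤ 1 := by decide

lemma erase_deg : ∀ (j : Fin 9) (κ : Fin 18), κ ∈ edges18 j →
    ((Finset.univ.erase j).filter fun i => κ ∈ edges18 i).card = 1 := by decide

lemma pair_le (w : Fin 18 → ℝ) (hw0 : ∀ κ, 0 ≤ w κ)
    (hsum : ∀ i, ∑ κ ∈ edges18 i, w κ = 1) {i : Fin 9} {a b : Fin 18}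
    (ha : a ∈ edges18 i) (hb : b ∈ edges18 i) (hab : a ≠ b) :
    w a + w b ≤ 1 := by
  have hsub : ({a, b} : Finset (Fin 18)) ⊆ edges18 i := by
    intro x hx
    rcases Finset.mem_insert.1 hx with h | h
    · exact h ▸ ha
    · exact (Finset.mem_singleton.1 h) ▸ hb
  have h := Finset.sum_le_sum_of_subset_of_nonneg hsub (fun κ _ _ => hw0 κ)
  rw [Finset.sum_pair hab] at h
  linarith [hsum i]

lemma sum_sup_le (w : Fin 18 → ℝ) (hw : ∀ κ, w κ ∈ Set.Icc (0:ℝ) 1)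
    (hsum : ∀ i, ∑ κ ∈ edges18 i, w κ = 1) :
    ∑ i, (edges18 i).sup' (edges18_nonempty i) w ≤ 15/2 := by
  set m : Fin 9 → ℝ := fun i => (edges18 i).sup' (edges18_nonempty i) w with hm
  have hw0 : ∀ κ, 0 ≤ w κ := fun κ => (hw κ).1
  have hw1 : ∀ κ, w κ ≤ 1 := fun κ => (hw κ).2
  have hmem : ∀ i, ∃ a ∈ edges18 i, m i = w a := fun i =>
    Finset.exists_mem_eq_sup' (edges18_nonempty i) w
  have hle : ∀ i, ∀ κ ∈ edges18 i, w κ ≤ m i := fun i κ hκ => Finset.le_sup' w hκ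
  have hm1 : ∀ i, m i ≤ 1 := by
    intro i; obtain ⟨a, _, h⟩ := hmem i; rw [h]; exact hw1 a
  set T : Finset (Fin 18) := Finset.univ.filter (fun κ => (1:ℝ)/2 < w κ) with hT
  have hTmem : ∀ κ, κ ∈ T ↔ (1:ℝ)/2 < w κ := by intro κ; simp [hT]
  have indep : ∀ (i : Fin 9) (a b : Fin 18), a ∈ T → b ∈ T →
      a ∈ edges18 i → b ∈ edges18 i → a = b := by
    intro i a b haT hbT ha hb
    by_contra hab
    have h := pair_le w hw0 hsum ha hb hab
    have h1 := (hTmem a).1 haT; have h2 := (hTmem b).1 hbT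
    linarith
  set C : Finset (Fin 9) :=
    T.biUnion (fun κ => Finset.univ.filter (fun i => κ ∈ edges18 i)) with hC
  have hCmem : ∀ i, i ∈ C ↔ ∃ κ ∈ T, κ ∈ edges18 i := by intro i; simp [hC]
  have hCcard : C.card = 2 * T.card := by
    rw [hC, Finset.card_biUnion]
    · rw [Finset.sum_congr rfl (fun κ _ => vertex_deg κ), Finset.sum_const, smul_eq_mul,
        mul_comm]
    · intro a haT b hbT hab
      simp only [Finset.disjoint_left, Finset.mem_filter]
      rintro i ⟨_, hai⟩ ⟨_, hbi⟩
      exact hab (indep i a b haT hbT hai hbi)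
  have hout : ∀ i ∉ C, m i ≤ 1/2 := by
    intro i hi
    obtain ⟨a, ha, hma⟩ := hmem i
    rw [hma]
    by_contra h
    exact hi ((hCmem i).2 ⟨a, (hTmem a).2 (by linarith), ha⟩)
  have hsplit : ∑ i ∈ C, m i + ∑ i ∈ Cᶜ, m i = ∑ i, m i :=
    Finset.sum_add_sum_compl C m
  have hCle9 : C.card ≤ 9 := le_trans (Finset.card_le_univ C) (by simp)
  have houtsum : ∑ i ∈ Cᶜ, m i ≤ (Cᶜ.card : ℝ) * (1/2) := by
    refine le_trans (Finset.sum_le_card_nsmul _ _ (1/2) ?_) (by simp [nsmul_eq_mul])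
    intro i hi
    exact hout i (by simpa using hi)
  have hcompl : (Cᶜ.card : ℝ) = 9 - (C.card : ℝ) := by
    rw [Finset.card_compl]
    have h9 : Fintype.card (Fin 9) = 9 := by simp
    rw [h9, Nat.cast_sub hCle9]
    norm_num
  by_cases hbig : T.card ≤ 3
  · have hinsum : ∑ i ∈ C, m i ≤ (C.card : ℝ) := by
      refine le_trans (Finset.sum_le_card_nsmul _ _ 1 (fun i _ => hm1 i)) (by simp)
    have hc6 : (C.card : ℝ) ≤ 6 := by
      have : C.card ≤ 6 := by omega
      exact_mod_cast this
    linarith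
  · have hT4 : T.card = 4 := by omega
    have hC8 : C.card = 8 := by omega
    have hc1 : Cᶜ.card = 1 := by
      have := Finset.card_compl (α := Fin 9) C
      simp [hC8] at this ⊢
      omega
    obtain ⟨j, hj⟩ := Finset.card_eq_one.1 hc1
    have hjC : j ∉ C := by
      have : j ∈ Cᶜ := hj ▸ Finset.mem_singleton_self j
      simpa using this
    have hCeq : C = Finset.univ.erase j := by
      rw [← compl_compl C, hj, Finset.compl_singleton]
    -- per-edge refined bound
    have hkey : ∀ i ∈ C, m i ≤ 1 - ∑ κ ∈ edges18 i ∩ edges18 j, w κ := by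
      intro i hiC
      have hij : i ≠ j := fun h => hjC (h ▸ hiC)
      rcases Finset.eq_empty_or_nonempty (edges18 i ∩ edges18 j) with he | ⟨κ, hκ⟩
      · rw [he, Finset.sum_empty]; linarith [hm1 i]
      · have hsing : edges18 i ∩ edges18 j = {κ} := by
          apply Finset.eq_singleton_iff_unique_mem.2
          exact ⟨hκ, fun x hx => Finset.card_le_one.1 (inter_card i j hij) x hx κ hκ⟩
        rw [hsing, Finset.sum_singleton]
        have hκi : κ ∈ edges18 i := (Finset.mem_inter.1 hκ).1
        have hκj : κ ∈ edges18 j := (Finset.mem_inter.1 hκ).2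
        have hκT : κ ∉ T := fun h => hjC ((hCmem j).2 ⟨κ, h, hκj⟩)
        have hκhalf : w κ ≤ 1/2 := by
          by_contra h
          exact hκT ((hTmem κ).2 (by linarith))
        obtain ⟨τ, hτT, hτi⟩ := (hCmem i).1 hiC
        obtain ⟨a, hai, hma⟩ := hmem i
        have hτa : w τ ≤ w a := hma ▸ hle i τ hτi
        have hτhalf := (hTmem τ).1 hτT
        have haκ : a ≠ κ := by
          rintro rfl
          linarith
        have := pair_le w hw0 hsum hai hκi haκ
        rw [hma]
        linarith
    have hinsum : ∑ i ∈ C, m i ≤ 7 := by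
      have h1 : ∑ i ∈ C, m i ≤ ∑ i ∈ C, (1 - ∑ κ ∈ edges18 i ∩ edges18 j, w κ) :=
        Finset.sum_le_sum hkey
      have h2 : ∑ i ∈ C, (1 - ∑ κ ∈ edges18 i ∩ edges18 j, w κ)
          = (C.card : ℝ) - ∑ i ∈ C, ∑ κ ∈ edges18 i ∩ edges18 j, w κ := by
        rw [Finset.sum_sub_distrib, Finset.sum_const, nsmul_eq_mul, mul_one]
      have h3 : ∑ i ∈ C, ∑ κ ∈ edges18 i ∩ edges18 j, w κ = ∑ κ ∈ edges18 j, w κ := by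
        rw [hCeq]
        have hrw : ∀ i, ∑ κ ∈ edges18 i ∩ edges18 j, w κ
            = ∑ κ ∈ edges18 j, if κ ∈ edges18 i then w κ else 0 := by
          intro i
          rw [Finset.inter_comm, ← Finset.filter_mem_eq_inter, Finset.sum_filter]
        rw [Finset.sum_congr rfl (fun i _ => hrw i), Finset.sum_comm]
        refine Finset.sum_congr rfl (fun κ hκ => ?_)
        rw [← Finset.sum_filter, Finset.sum_const, erase_deg j κ hκ, one_smul]
      rw [h2, h3, hsum j, hC8] at h1
      norm_num at h1
      linarith
    have hmj : ∑ i ∈ Cᶜ, m i ≤ 1/2 := by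
      rw [hj, Finset.sum_singleton]
      exact hout j hjC
    linarith

lemma sum4 (f : Fin 18 → ℝ) (a b c d : Fin 18) (h : a ∉ ({b,c,d}:Finset (Fin 18)))
    (h2 : b ∉ ({c,d}:Finset (Fin 18))) (h3 : c ≠ d) :
    ∑ κ ∈ ({a,b,c,d}:Finset (Fin 18)), f κ = f a + f b + f c + f d := by
  rw [Finset.sum_insert h, Finset.sum_insert h2, Finset.sum_insert (by simp [h3]),
    Finset.sum_singleton]; ring

lemma sup4 (f : Fin 18 → ℝ) (a b c d : Fin 18) (H : (({a,b,c,d}:Finset (Fin 18))).Nonempty) :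
    (({a,b,c,d}:Finset (Fin 18))).sup' H f = f a ⊔ (f b ⊔ (f c ⊔ f d)) := by
  simp [Finset.sup'_insert]

lemma wOpt_sums : ∀ i, ∑ κ ∈ edges18 i, wOpt κ = 1 := by
  intro i; fin_cases i
  · show ∑ κ ∈ ({0,1,2,3}:Finset (Fin 18)), wOpt κ = 1
    rw [sum4 _ _ _ _ _ (by decide) (by decide) (by decide)]; show (1:ℝ)+0+0+0 = 1; norm_num
  · show ∑ κ ∈ ({3,4,5,6}:Finset (Fin 18)), wOpt κ = 1
    rw [sum4 _ _ _ _ _ (by decide) (by decide) (by decide)]; show (0:ℝ)+1+0+0 = 1; norm_num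
  · show ∑ κ ∈ ({6,7,8,9}:Finset (Fin 18)), wOpt κ = 1
    rw [sum4 _ _ _ _ _ (by decide) (by decide) (by decide)]; show (0:ℝ)+0+1/2+1/2 = 1; norm_num
  · show ∑ κ ∈ ({9,10,11,12}:Finset (Fin 18)), wOpt κ = 1
    rw [sum4 _ _ _ _ _ (by decide) (by decide) (by decide)]; show (1/2:ℝ)+1/2+0+0 = 1; norm_num
  · show ∑ κ ∈ ({12,13,14,15}:Finset (Fin 18)), wOpt κ = 1
    rw [sum4 _ _ _ _ _ (by decide) (by decide) (by decide)]; show (0:ℝ)+0+1+0 = 1; norm_num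
  · show ∑ κ ∈ ({15,16,17,0}:Finset (Fin 18)), wOpt κ = 1
    rw [sum4 _ _ _ _ _ (by decide) (by decide) (by decide)]; show (0:ℝ)+0+0+1 = 1; norm_num
  · show ∑ κ ∈ ({17,1,8,10}:Finset (Fin 18)), wOpt κ = 1
    rw [sum4 _ _ _ _ _ (by decide) (by decide) (by decide)]; show (0:ℝ)+0+1/2+1/2 = 1; norm_num
  · show ∑ κ ∈ ({2,4,11,13}:Finset (Fin 18)), wOpt κ = 1
    rw [sum4 _ _ _ _ _ (by decide) (by decide) (by decide)]; show (0:ℝ)+1+0+0 = 1; norm_num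
  · show ∑ κ ∈ ({5,7,14,16}:Finset (Fin 18)), wOpt κ = 1
    rw [sum4 _ _ _ _ _ (by decide) (by decide) (by decide)]; show (0:ℝ)+0+1+0 = 1; norm_num

lemma wOpt_avg : (1 / 9 : ℝ) * ∑ i, (edges18 i).sup' (edges18_nonempty i) wOpt = 5 / 6 := by
  have h : ∀ i, (edges18 i).sup' (edges18_nonempty i) wOpt = ![1,1,1/2,1/2,1,1,1/2,1,1] i := by
    intro i; fin_cases i
    · show ({0,1,2,3}:Finset (Fin 18)).sup' (by decide) wOpt = (1:ℝ)
      rw [sup4]; show (1:ℝ) ⊔ (0 ⊔ (0 ⊔ 0)) = 1; norm_num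
    · show ({3,4,5,6}:Finset (Fin 18)).sup' (by decide) wOpt = (1:ℝ)
      rw [sup4]; show (0:ℝ) ⊔ (1 ⊔ (0 ⊔ 0)) = 1; norm_num
    · show ({6,7,8,9}:Finset (Fin 18)).sup' (by decide) wOpt = (1/2:ℝ)
      rw [sup4]; show (0:ℝ) ⊔ (0 ⊔ (1/2 ⊔ 1/2)) = 1/2; norm_num
    · show ({9,10,11,12}:Finset (Fin 18)).sup' (by decide) wOpt = (1/2:ℝ)
      rw [sup4]; show (1/2:ℝ) ⊔ (1/2 ⊔ (0 ⊔ 0)) = 1/2; norm_num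
    · show ({12,13,14,15}:Finset (Fin 18)).sup' (by decide) wOpt = (1:ℝ)
      rw [sup4]; show (0:ℝ) ⊔ (0 ⊔ (1 ⊔ 0)) = 1; norm_num
    · show ({15,16,17,0}:Finset (Fin 18)).sup' (by decide) wOpt = (1:ℝ)
      rw [sup4]; show (0:ℝ) ⊔ (0 ⊔ (0 ⊔ 1)) = 1; norm_num
    · show ({17,1,8,10}:Finset (Fin 18)).sup' (by decide) wOpt = (1/2:ℝ)
      rw [sup4]; show (0:ℝ) ⊔ (0 ⊔ (1/2 ⊔ 1/2)) = 1/2; norm_num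
    · show ({2,4,11,13}:Finset (Fin 18)).sup' (by decide) wOpt = (1:ℝ)
      rw [sup4]; show (0:ℝ) ⊔ (1 ⊔ (0 ⊔ 0)) = 1; norm_num
    · show ({5,7,14,16}:Finset (Fin 18)).sup' (by decide) wOpt = (1:ℝ)
      rw [sup4]; show (0:ℝ) ⊔ (0 ⊔ (1 ⊔ 0)) = 1; norm_num
  rw [Finset.sum_congr rfl (fun i _ => h i)]
  rw [show ∑ i : Fin 9, (![1,1,1/2,1/2,1,1,1/2,1,1] : Fin 9 → ℝ) i
      = (1:ℝ)+1+1/2+1/2+1+1+1/2+1+1 from by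
    simp [Fin.sum_univ_succ]; ring]
  norm_num

/-- **The 5/6 bound on average max-predictability over the 18-ray hypergraph.** Every
probabilistic assignment to the 18 vertices that is normalized on each of the nine edges has
average max-predictability at most `5/6`, and the bound is attained by `wOpt`. -/
theorem eighteen_ray_max_predictability_bound :
    (∀ w : Fin 18 → ℝ, (∀ κ, w κ ∈ Set.Icc (0 : ℝ) 1) →
      (∀ i, ∑ κ ∈ edges18 i, w κ = 1) →
      (1 / 9 : ℝ) * ∑ i, (edges18 i).sup' (edges18_nonempty i) w ≤ 5 / 6) ∧
    ((∀ κ, wOpt κ ∈ Set.Icc (0 : ℝ) 1) ∧ (∀ i, ∑ κ ∈ edges18 i, wOpt κ = 1) ∧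
      (1 / 9 : ℝ) * ∑ i, (edges18 i).sup' (edges18_nonempty i) wOpt = 5 / 6) := by
  refine ⟨fun w hw hsum => ?_, ?_, wOpt_sums, wOpt_avg⟩
  · have h := sum_sup_le w hw hsum
    linarith
  · intro κ; fin_cases κ <;> norm_num [wOpt]
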